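/- A sequence v : ℕ → [0,1] is Buck uniformly distributed modulo 1 if and only if for every ε > 0 there exist finitely many pairwise disjoint intervals I_1, ..., I_s covering [0,1) with |I_j| < ε such that each preimage v^{-1}(I_j) is Buck measurable with μ(v^{-1}(I_j)) = |I_j|. -/

import Mathlib

open scoped BigOperators

/-- Buck's measure density of a set of natural numbers. -/
noncomputable def buckDensity (S : Set ℕ) : ℝ :=
  sInf {x : ℝ | ∃ (k : ℕ) (r D : Fin k → ℕ), (∀ j, 0 < D j) ∧
    (S ⊆ ⋃ j, {n : ℕ | n % D j = r j % D j}) ∧ x = ∑ j, (1 : ℝ) / (D j : ℝ)}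

/-- A set is Buck measurable if its density and its complement's density sum to 1. -/
def BuckMeasurable (S : Set ℕ) : Prop :=
  buckDensity S + buckDensity Sᶜ = 1

/-- A `[0,1]`-valued sequence is Buck uniformly distributed mod 1 if the preimage of
every subinterval of `[0,1]` is Buck measurable with density equal to the length. -/
def BuckUD (v : ℕ → ℝ) : Prop :=
  ∀ a b : ℝ, 0 ≤ a → a ≤ b → b ≤ 1 →
    BuckMeasurable {n : ℕ | v n ∈ Set.Ico a b} ∧
    buckDensity {n : ℕ | v n ∈ Set.Ico a b} = b - a

section BuckAuxSection
open Finset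

namespace BuckAux

def coverSet (S : Set ℕ) : Set ℝ :=
  {x : ℝ | ∃ (k : ℕ) (r D : Fin k → ℕ), (∀ j, 0 < D j) ∧
    (S ⊆ ⋃ j, {n : ℕ | n % D j = r j % D j}) ∧ x = ∑ j, (1 : ℝ) / (D j : ℝ)}

lemma buckDensity_def (S : Set ℕ) : buckDensity S = sInf (coverSet S) := rfl

lemma one_mem (S : Set ℕ) : (1 : ℝ) ∈ coverSet S := by
  refine ⟨1, fun _ => 0, fun _ => 1, fun j => one_pos, ?_, by simp⟩
  intro n _
  simp [Set.mem_iUnion, Nat.mod_one]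

lemma nonneg_mem {S : Set ℕ} {x : ℝ} (hx : x ∈ coverSet S) : 0 ≤ x := by
  obtain ⟨k, r, D, hD, -, rfl⟩ := hx
  exact Finset.sum_nonneg fun j _ => by positivity

lemma coverSet_nonempty (S : Set ℕ) : (coverSet S).Nonempty := ⟨1, one_mem S⟩

lemma coverSet_bddBelow (S : Set ℕ) : BddBelow (coverSet S) :=
  ⟨0, fun x hx => nonneg_mem hx⟩

lemma density_nonneg (S : Set ℕ) : 0 ≤ buckDensity S :=
  le_csInf (coverSet_nonempty S) (fun x hx => nonneg_mem hx)

lemma density_le_one (S : Set ℕ) : buckDensity S ≤ 1 :=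
  csInf_le (coverSet_bddBelow S) (one_mem S)

lemma density_mono {S T : Set ℕ} (h : S ⊆ T) : buckDensity S ≤ buckDensity T :=
  csInf_le_csInf (coverSet_bddBelow S) (coverSet_nonempty T)
    (fun x ⟨k, r, D, hD, hc, hx⟩ => ⟨k, r, D, hD, h.trans hc, hx⟩)

/-- counting residues in a range -/
lemma card_filter_mod (m M v : ℕ) (hv : v < M) :
    ((range (m * M)).filter (fun t => t % M = v)).card = m := by
  have : (range (m * M)).filter (fun t => t % M = v) = (range m).image (fun q => q * M + v) := by
    ext t
    simp only [mem_filter, mem_range, mem_image]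
    have hM : 0 < M := lt_of_le_of_lt (Nat.zero_le v) hv
    constructor
    · rintro ⟨ht, rfl⟩
      refine ⟨t / M, ?_, ?_⟩
      · exact (Nat.div_lt_iff_lt_mul hM).mpr ht
      · have h1 := Nat.div_add_mod t M
        have h2 : t / M * M = M * (t / M) := mul_comm _ _
        omega
    · rintro ⟨q, hq, rfl⟩
      refine ⟨?_, ?_⟩
      · have : (q + 1) * M ≤ m * M := Nat.mul_le_mul_right M hq
        nlinarith
      · rw [mul_comm, Nat.mul_add_mod, Nat.mod_eq_of_lt hv]
  have hM : 0 < M := lt_of_le_of_lt (Nat.zero_le v) hv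
  rw [this, Finset.card_image_of_injective _
    (fun a b hab => Nat.eq_of_mul_eq_mul_right hM (Nat.add_right_cancel hab)), Finset.card_range]

end BuckAux

namespace BuckAux

lemma card_filter_mod_mem (m M : ℕ) (F : Finset ℕ) (hF : ∀ v ∈ F, v < M) :
    ((range (m * M)).filter (fun t => t % M ∈ F)).card = m * F.card := by
  have : (range (m * M)).filter (fun t => t % M ∈ F)
      = F.biUnion (fun v => (range (m * M)).filter (fun t => t % M = v)) := by
    ext t
    simp only [mem_filter, mem_biUnion, mem_range]
    constructor
    · rintro ⟨ht, hm⟩; exact ⟨t % M, hm, ht, rfl⟩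
    · rintro ⟨v, hv, ht, rfl⟩; exact ⟨ht, hv⟩
  rw [this, Finset.card_biUnion]
  · rw [Finset.sum_congr rfl (fun v hv => card_filter_mod m M v (hF v hv)),
      Finset.sum_const, smul_eq_mul, mul_comm]
  · intro u hu w hw huw
    simp only [Finset.disjoint_left, mem_filter]
    rintro t ⟨-, rfl⟩ ⟨-, h⟩
    exact huw h

lemma le_of_periodic {S : Set ℕ} {N : ℕ} {F : Finset ℕ} (hN : 0 < N)
    (hFlt : ∀ v ∈ F, v < N) (hS : ∀ n ∈ S, n % N ∈ F) :
    buckDensity S ≤ (F.card : ℝ) / N := by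
  apply csInf_le (coverSet_bddBelow S)
  refine ⟨F.card, fun j => ((F.equivFin.symm j : ℕ)), fun _ => N, fun _ => hN, ?_, ?_⟩
  · intro n hn
    have h := hS n hn
    refine Set.mem_iUnion.mpr ⟨F.equivFin ⟨n % N, h⟩, ?_⟩
    have : ((F.equivFin.symm (F.equivFin ⟨n % N, h⟩) : ℕ)) = n % N := by
      rw [Equiv.symm_apply_apply]
    simp only [Set.mem_setOf_eq, this]
    rw [Nat.mod_eq_of_lt (hFlt _ h)]
  · rw [Finset.sum_const, Finset.card_univ, Fintype.card_fin, nsmul_eq_mul]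
    ring

lemma exists_periodic {S : Set ℕ} {x : ℝ} (hx : x ∈ coverSet S) :
    ∃ (N : ℕ) (F : Finset ℕ), 0 < N ∧ (∀ v ∈ F, v < N) ∧
      (∀ n ∈ S, n % N ∈ F) ∧ (F.card : ℝ) ≤ N * x := by
  obtain ⟨k, r, D, hD, hcov, rfl⟩ := hx
  set N := ∏ j, D j with hNdef
  have hN : 0 < N := Finset.prod_pos (fun j _ => hD j)
  have hdvd : ∀ j, D j ∣ N := fun j => Finset.dvd_prod_of_mem D (mem_univ j)
  classical
  refine ⟨N, (range N).filter (fun t => ∃ j, t % D j = r j % D j), hN, ?_, ?_, ?_⟩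
  · intro v hv; exact mem_range.mp (mem_filter.mp hv).1
  · intro n hn
    obtain ⟨j, hj⟩ := Set.mem_iUnion.mp (hcov hn)
    refine mem_filter.mpr ⟨mem_range.mpr (Nat.mod_lt n hN), ⟨j, ?_⟩⟩
    rw [Nat.mod_mod_of_dvd n (hdvd j)]
    exact hj
  · have hsub : (range N).filter (fun t => ∃ j, t % D j = r j % D j)
        ⊆ Finset.univ.biUnion (fun j => (range N).filter (fun t => t % D j = r j % D j)) := by
      intro t ht
      obtain ⟨htN, j, hj⟩ := mem_filter.mp ht
      exact mem_biUnion.mpr ⟨j, mem_univ j, mem_filter.mpr ⟨htN, hj⟩⟩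
    have hcard : ∀ j, ((range N).filter (fun t => t % D j = r j % D j)).card = N / D j := by
      intro j
      have h1 := card_filter_mod (N / D j) (D j) (r j % D j) (Nat.mod_lt _ (hD j))
      rwa [Nat.div_mul_cancel (hdvd j)] at h1
    calc ((filter (fun t => ∃ j, t % D j = r j % D j) (range N)).card : ℝ)
        ≤ ((Finset.univ.biUnion (fun j => (range N).filter (fun t => t % D j = r j % D j))).card : ℝ) := by
          exact_mod_cast Finset.card_le_card hsub
      _ ≤ ∑ j, (((range N).filter (fun t => t % D j = r j % D j)).card : ℝ) := by
          exact_mod_cast Finset.card_biUnion_le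
      _ = ∑ j, ((N / D j : ℕ) : ℝ) := by
          exact Finset.sum_congr rfl (fun j _ => by rw [hcard j])
      _ = ∑ j, (N : ℝ) * (1 / (D j : ℝ)) := by
          refine Finset.sum_congr rfl (fun j _ => ?_)
          rw [Nat.cast_div (hdvd j) (by exact_mod_cast (hD j).ne')]
          ring
      _ = (N : ℝ) * ∑ j, (1 : ℝ) / (D j : ℝ) := by rw [Finset.mul_sum]

lemma density_univ : buckDensity Set.univ = 1 := by
  refine le_antisymm (density_le_one _) (le_csInf (coverSet_nonempty _) ?_)
  intro x hx
  obtain ⟨N, F, hN, hFlt, hcov, hcard⟩ := exists_periodic hx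
  have hsub : range N ⊆ F := by
    intro t ht
    have := hcov t (Set.mem_univ t)
    rwa [Nat.mod_eq_of_lt (mem_range.mp ht)] at this
  have : (N : ℝ) ≤ N * x := by
    calc (N : ℝ) = ((range N).card : ℝ) := by rw [Finset.card_range]
      _ ≤ (F.card : ℝ) := by exact_mod_cast Finset.card_le_card hsub
      _ ≤ N * x := hcard
  have hN' : (0 : ℝ) < N := by exact_mod_cast hN
  nlinarith

end BuckAux

namespace BuckAux

lemma density_union_le (S T : Set ℕ) :
    buckDensity (S ∪ T) ≤ buckDensity S + buckDensity T := by
  classical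
  refine le_of_forall_pos_le_add (fun δ hδ => ?_)
  obtain ⟨x₁, hx₁, hx₁lt⟩ := Real.lt_sInf_add_pos (coverSet_nonempty S) (half_pos hδ)
  obtain ⟨x₂, hx₂, hx₂lt⟩ := Real.lt_sInf_add_pos (coverSet_nonempty T) (half_pos hδ)
  obtain ⟨N₁, F₁, hN₁, hF₁lt, hcov₁, hcard₁⟩ := exists_periodic hx₁
  obtain ⟨N₂, F₂, hN₂, hF₂lt, hcov₂, hcard₂⟩ := exists_periodic hx₂
  set N := N₁ * N₂ with hNdef
  have hN : 0 < N := Nat.mul_pos hN₁ hN₂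
  set G := (range N).filter (fun t => t % N₁ ∈ F₁ ∨ t % N₂ ∈ F₂) with hGdef
  have hle : buckDensity (S ∪ T) ≤ (G.card : ℝ) / N := by
    refine le_of_periodic hN (fun v hv => mem_range.mp (mem_filter.mp hv).1) ?_
    intro n hn
    refine mem_filter.mpr ⟨mem_range.mpr (Nat.mod_lt n hN), ?_⟩
    rcases hn with hn | hn
    · left; rw [Nat.mod_mod_of_dvd n ⟨N₂, rfl⟩]; exact hcov₁ n hn
    · right; rw [Nat.mod_mod_of_dvd n ⟨N₁, mul_comm N₁ N₂⟩]; exact hcov₂ n hn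
  have hGsub : G ⊆ (range N).filter (fun t => t % N₁ ∈ F₁)
      ∪ (range N).filter (fun t => t % N₂ ∈ F₂) := by
    intro t ht
    obtain ⟨h1, h2⟩ := mem_filter.mp ht
    rcases h2 with h2 | h2
    · exact mem_union_left _ (mem_filter.mpr ⟨h1, h2⟩)
    · exact mem_union_right _ (mem_filter.mpr ⟨h1, h2⟩)
  have hc1 : ((range N).filter (fun t => t % N₁ ∈ F₁)).card = N₂ * F₁.card := by
    have := card_filter_mod_mem N₂ N₁ F₁ hF₁lt
    rwa [mul_comm N₂ N₁] at this
  have hc2 : ((range N).filter (fun t => t % N₂ ∈ F₂)).card = N₁ * F₂.card :=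
    card_filter_mod_mem N₁ N₂ F₂ hF₂lt
  have hGcard : (G.card : ℝ) ≤ (N : ℝ) * (x₁ + x₂) := by
    have h := (Finset.card_le_card hGsub).trans (Finset.card_union_le _ _)
    rw [hc1, hc2] at h
    have h' : (G.card : ℝ) ≤ (N₂ : ℝ) * F₁.card + (N₁ : ℝ) * F₂.card := by exact_mod_cast h
    have e1 : (N₂ : ℝ) * F₁.card ≤ (N : ℝ) * x₁ := by
      have : (N : ℝ) = N₁ * N₂ := by exact_mod_cast rfl
      rw [this]
      have hN₂' : (0:ℝ) ≤ N₂ := by positivity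
      nlinarith [hcard₁]
    have e2 : (N₁ : ℝ) * F₂.card ≤ (N : ℝ) * x₂ := by
      have : (N : ℝ) = N₁ * N₂ := by exact_mod_cast rfl
      rw [this]
      have hN₁' : (0:ℝ) ≤ N₁ := by positivity
      nlinarith [hcard₂]
    linarith
  have hN' : (0 : ℝ) < N := by exact_mod_cast hN
  calc buckDensity (S ∪ T) ≤ (G.card : ℝ) / N := hle
    _ ≤ x₁ + x₂ := by rw [div_le_iff₀ hN']; linarith [hGcard]
    _ ≤ buckDensity S + buckDensity T + δ := by
        rw [buckDensity_def S, buckDensity_def T]; linarith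

lemma density_inter_le (A B : Set ℕ) (hU : A ∪ B = Set.univ) :
    buckDensity (A ∩ B) ≤ buckDensity A + buckDensity B - 1 := by
  classical
  have key : ∀ δ > (0:ℝ), buckDensity (A ∩ B) ≤ buckDensity A + buckDensity B - 1 + δ := by
    intro δ hδ
    obtain ⟨x₁, hx₁, hx₁lt⟩ := Real.lt_sInf_add_pos (coverSet_nonempty A) (half_pos hδ)
    obtain ⟨x₂, hx₂, hx₂lt⟩ := Real.lt_sInf_add_pos (coverSet_nonempty B) (half_pos hδ)
    obtain ⟨N₁, F₁, hN₁, hF₁lt, hcov₁, hcard₁⟩ := exists_periodic hx₁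
    obtain ⟨N₂, F₂, hN₂, hF₂lt, hcov₂, hcard₂⟩ := exists_periodic hx₂
    set N := N₁ * N₂ with hNdef
    have hN : 0 < N := Nat.mul_pos hN₁ hN₂
    set G₁ := (range N).filter (fun t => t % N₁ ∈ F₁) with hG₁def
    set G₂ := (range N).filter (fun t => t % N₂ ∈ F₂) with hG₂def
    have hle : buckDensity (A ∩ B) ≤ (((G₁ ∩ G₂).card : ℕ) : ℝ) / N := by
      refine le_of_periodic hN
        (fun v hv => mem_range.mp (mem_filter.mp (mem_inter.mp hv).1).1) ?_
      intro n hn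
      have hnN : n % N < N := Nat.mod_lt n hN
      refine mem_inter.mpr ⟨mem_filter.mpr ⟨mem_range.mpr hnN, ?_⟩,
        mem_filter.mpr ⟨mem_range.mpr hnN, ?_⟩⟩
      · rw [Nat.mod_mod_of_dvd n ⟨N₂, rfl⟩]; exact hcov₁ n hn.1
      · rw [Nat.mod_mod_of_dvd n ⟨N₁, mul_comm N₁ N₂⟩]; exact hcov₂ n hn.2
    have hcup : G₁ ∪ G₂ = range N := by
      apply Finset.Subset.antisymm
      · intro t ht
        rcases mem_union.mp ht with h | h
        · exact (mem_filter.mp h).1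
        · exact (mem_filter.mp h).1
      · intro t ht
        have : t ∈ A ∪ B := hU ▸ Set.mem_univ t
        rcases this with h | h
        · exact mem_union_left _ (mem_filter.mpr
            ⟨ht, hcov₁ t h⟩)
        · exact mem_union_right _ (mem_filter.mpr
            ⟨ht, hcov₂ t h⟩)
    have hsum := Finset.card_inter_add_card_union G₁ G₂
    rw [hcup, Finset.card_range] at hsum
    have hc1 : G₁.card = N₂ * F₁.card := by
      have := card_filter_mod_mem N₂ N₁ F₁ hF₁lt
      rwa [mul_comm N₂ N₁] at this
    have hc2 : G₂.card = N₁ * F₂.card := card_filter_mod_mem N₁ N₂ F₂ hF₂lt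
    have hN' : (0 : ℝ) < N := by exact_mod_cast hN
    have hNeq : (N : ℝ) = (N₁ : ℝ) * N₂ := by exact_mod_cast rfl
    have hIcard : ((G₁ ∩ G₂).card : ℝ) = (N₂ : ℝ) * F₁.card + (N₁ : ℝ) * F₂.card - N := by
      have h0 : ((G₁ ∩ G₂).card : ℝ) + N = (G₁.card : ℝ) + G₂.card := by exact_mod_cast hsum
      rw [hc1, hc2] at h0
      push_cast at h0 ⊢
      linarith
    have e1 : (N₂ : ℝ) * F₁.card ≤ (N : ℝ) * x₁ := by
      rw [hNeq]
      have hN₂' : (0:ℝ) ≤ N₂ := by positivity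
      nlinarith [hcard₁]
    have e2 : (N₁ : ℝ) * F₂.card ≤ (N : ℝ) * x₂ := by
      rw [hNeq]
      have hN₁' : (0:ℝ) ≤ N₁ := by positivity
      nlinarith [hcard₂]
    calc buckDensity (A ∩ B) ≤ ((G₁ ∩ G₂).card : ℝ) / N := hle
      _ ≤ x₁ + x₂ - 1 := by
          rw [div_le_iff₀ hN', hIcard]
          nlinarith
      _ ≤ buckDensity A + buckDensity B - 1 + δ := by
          rw [buckDensity_def A, buckDensity_def B]; linarith
  by_contra hcon
  push_neg at hcon
  have := key ((buckDensity (A ∩ B) - (buckDensity A + buckDensity B - 1)) / 2) (by linarith)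
  linarith

lemma one_le_add_compl (S : Set ℕ) : 1 ≤ buckDensity S + buckDensity Sᶜ := by
  have h := density_union_le S Sᶜ
  rw [Set.union_compl_self, density_univ] at h
  exact h

end BuckAux

namespace BuckAux

lemma density_empty : buckDensity (∅ : Set ℕ) = 0 := by
  refine le_antisymm ?_ (density_nonneg _)
  apply csInf_le (coverSet_bddBelow _)
  exact ⟨0, Fin.elim0, Fin.elim0, fun j => j.elim0, by simp, by simp⟩

lemma measurable_empty : BuckMeasurable (∅ : Set ℕ) := by
  unfold BuckMeasurable
  rw [density_empty, Set.compl_empty, density_univ]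
  ring

lemma measurable_union_disjoint {S T : Set ℕ} (hd : Disjoint S T)
    (hS : BuckMeasurable S) (hT : BuckMeasurable T) :
    BuckMeasurable (S ∪ T) ∧ buckDensity (S ∪ T) = buckDensity S + buckDensity T := by
  have h1 : buckDensity (S ∪ T) ≤ buckDensity S + buckDensity T := density_union_le S T
  have hU : Sᶜ ∪ Tᶜ = Set.univ := by
    rw [← Set.compl_inter, Set.disjoint_iff_inter_eq_empty.mp hd, Set.compl_empty]
  have h2 : buckDensity ((S ∪ T)ᶜ) ≤ buckDensity Sᶜ + buckDensity Tᶜ - 1 := by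
    rw [Set.compl_union]
    exact density_inter_le _ _ hU
  have h3 := one_le_add_compl (S ∪ T)
  unfold BuckMeasurable at hS hT ⊢
  constructor <;> linarith

lemma finset_additive {ι : Type*} (J : Finset ι) (S : ι → Set ℕ)
    (hd : ∀ i ∈ J, ∀ j ∈ J, i ≠ j → Disjoint (S i) (S j))
    (hm : ∀ j ∈ J, BuckMeasurable (S j)) :
    BuckMeasurable (⋃ j ∈ J, S j) ∧
      buckDensity (⋃ j ∈ J, S j) = ∑ j ∈ J, buckDensity (S j) := by
  classical
  induction J using Finset.induction_on with
  | empty => simpa using ⟨measurable_empty, density_empty⟩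
  | @insert a J ha ih =>
    have hdJ : ∀ i ∈ J, ∀ j ∈ J, i ≠ j → Disjoint (S i) (S j) :=
      fun i hi j hj => hd i (mem_insert_of_mem hi) j (mem_insert_of_mem hj)
    have hmJ : ∀ j ∈ J, BuckMeasurable (S j) := fun j hj => hm j (mem_insert_of_mem hj)
    obtain ⟨ihm, ihd⟩ := ih hdJ hmJ
    have hdis : Disjoint (S a) (⋃ j ∈ J, S j) := by
      rw [Set.disjoint_iUnion₂_right]
      intro j hj
      exact hd a (mem_insert_self a J) j (mem_insert_of_mem hj) (fun h => ha (h ▸ hj))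
    have hun : (⋃ j ∈ insert a J, S j) = S a ∪ ⋃ j ∈ J, S j := by
      simp [Set.biUnion_insert]
    obtain ⟨hm', hd'⟩ := measurable_union_disjoint hdis (hm a (mem_insert_self a J)) ihm
    rw [hun, Finset.sum_insert ha]
    exact ⟨hm', by rw [hd', ihd]⟩

open MeasureTheory in
lemma sum_lengths_le {s : ℕ} (a b : Fin s → ℝ) (J : Finset (Fin s))
    (hdisj : Pairwise fun i j => Disjoint (Set.Ico (a i) (b i)) (Set.Ico (a j) (b j)))
    (hnn : ∀ j, a j ≤ b j) (c d : ℝ) (hcd : c ≤ d)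
    (hsub : ∀ j ∈ J, Set.Ico (a j) (b j) ⊆ Set.Ico c d) :
    ∑ j ∈ J, (b j - a j) ≤ d - c := by
  have hvol : volume (⋃ j ∈ J, Set.Ico (a j) (b j)) = ∑ j ∈ J, volume (Set.Ico (a j) (b j)) := by
    refine measure_biUnion_finset ?_ (fun j _ => measurableSet_Ico)
    intro i _ j _ hij
    exact hdisj hij
  have hmono : volume (⋃ j ∈ J, Set.Ico (a j) (b j)) ≤ volume (Set.Ico c d) :=
    measure_mono (Set.iUnion₂_subset hsub)
  rw [hvol] at hmono
  simp only [Real.volume_Ico] at hmono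
  rw [← ENNReal.ofReal_sum_of_nonneg (fun j _ => sub_nonneg.mpr (hnn j))] at hmono
  exact (ENNReal.ofReal_le_ofReal_iff (by linarith)).mp hmono

open MeasureTheory in
lemma le_sum_lengths {s : ℕ} (a b : Fin s → ℝ) (J : Finset (Fin s))
    (hnn : ∀ j, a j ≤ b j) (c d : ℝ)
    (hcov : Set.Ico c d ⊆ ⋃ j ∈ J, Set.Ico (a j) (b j)) :
    d - c ≤ ∑ j ∈ J, (b j - a j) := by
  rcases le_or_gt d c with h | h
  · have : (0:ℝ) ≤ ∑ j ∈ J, (b j - a j) :=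
      Finset.sum_nonneg (fun j _ => sub_nonneg.mpr (hnn j))
    linarith
  have hmono : volume (Set.Ico c d) ≤ ∑ j ∈ J, volume (Set.Ico (a j) (b j)) :=
    (measure_mono hcov).trans (measure_biUnion_finset_le _ _)
  simp only [Real.volume_Ico] at hmono
  rw [← ENNReal.ofReal_sum_of_nonneg (fun j _ => sub_nonneg.mpr (hnn j))] at hmono
  exact (ENNReal.ofReal_le_ofReal_iff
    (Finset.sum_nonneg (fun j _ => sub_nonneg.mpr (hnn j)))).mp hmono

end BuckAux


open BuckAux

end BuckAuxSection

open BuckAux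

/-- Criterion for Buck uniform distribution via fine disjoint interval partitions
of [0,1). -/
theorem stmt2 (v : ℕ → ℝ) (hv : ∀ n, v n ∈ Set.Icc (0 : ℝ) 1) :
    BuckUD v ↔
    ∀ ε > (0 : ℝ), ∃ (s : ℕ) (a b : Fin s → ℝ),
      (Pairwise fun i j => Disjoint (Set.Ico (a i) (b i)) (Set.Ico (a j) (b j))) ∧
      (⋃ j, Set.Ico (a j) (b j)) = Set.Ico (0 : ℝ) 1 ∧
      ∀ j, b j - a j < ε ∧
        BuckMeasurable {n : ℕ | v n ∈ Set.Ico (a j) (b j)} ∧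
        buckDensity {n : ℕ | v n ∈ Set.Ico (a j) (b j)} = b j - a j := by
  constructor
  · -- forward
    intro hud ε hε
    obtain ⟨s0, hs0⟩ : ∃ s0 : ℕ, 1 / ε < s0 := exists_nat_gt _
    refine ⟨s0 + 1, fun j => ((j : ℕ) : ℝ) / ((s0:ℝ) + 1),
      fun j => (((j : ℕ) : ℝ) + 1) / ((s0:ℝ) + 1), ?_, ?_, ?_⟩
    case _ =>
      intro i j hij
      rw [Set.Ico_disjoint_Ico]
      have hs : (0:ℝ) < (s0:ℝ) + 1 := by positivity
      rcases lt_or_gt_of_ne (Fin.val_injective.ne hij) with h | h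
      · have h' : ((i:ℕ):ℝ) + 1 ≤ ((j:ℕ):ℝ) := by exact_mod_cast h
        exact (min_le_left _ _).trans (((div_le_div_iff_of_pos_right hs).mpr h').trans (le_max_right _ _))
      · have h' : ((j:ℕ):ℝ) + 1 ≤ ((i:ℕ):ℝ) := by exact_mod_cast h
        exact (min_le_right _ _).trans (((div_le_div_iff_of_pos_right hs).mpr h').trans (le_max_left _ _))
    case _ =>
      have hs : (0:ℝ) < (s0:ℝ) + 1 := by positivity
      ext x
      simp only [Set.mem_iUnion, Set.mem_Ico]
      constructor
      · rintro ⟨j, hj1, hj2⟩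
        refine ⟨le_trans (by positivity) hj1, lt_of_lt_of_le hj2 ?_⟩
        rw [div_le_one hs]
        have hjs : (j:ℕ) + 1 ≤ s0 + 1 := j.isLt
        exact_mod_cast hjs
      · rintro ⟨hx0, hx1⟩
        have hxs : x * ((s0:ℝ)+1) < (s0:ℝ)+1 := by nlinarith
        have hflr : ⌊x * ((s0:ℝ)+1)⌋₊ < s0 + 1 := by
          rw [Nat.floor_lt (by positivity)]
          exact_mod_cast hxs
        refine ⟨⟨⌊x * ((s0:ℝ)+1)⌋₊, hflr⟩, ?_, ?_⟩
        · rw [div_le_iff₀ hs]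
          exact Nat.floor_le (by positivity)
        · rw [lt_div_iff₀ hs]
          exact_mod_cast Nat.lt_floor_add_one (x * ((s0:ℝ)+1))
    case _ =>
      intro j
      have hs : (0:ℝ) < (s0:ℝ) + 1 := by positivity
      have hlen : (((j:ℕ):ℝ) + 1) / ((s0:ℝ)+1) - ((j:ℕ):ℝ) / ((s0:ℝ)+1) = 1 / ((s0:ℝ)+1) := by
        field_simp
        ring
      have h1s : 1 / ((s0:ℝ)+1) < ε := by
        rw [div_lt_iff₀ hs]
        have h2 : 1 / ε < (s0:ℝ) + 1 := hs0.trans (by linarith [Nat.cast_nonneg (α := ℝ) s0])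
        rw [div_lt_iff₀ hε] at h2
        nlinarith
      have ha0 : (0:ℝ) ≤ ((j:ℕ):ℝ) / ((s0:ℝ)+1) := by positivity
      have hab : ((j:ℕ):ℝ) / ((s0:ℝ)+1) ≤ (((j:ℕ):ℝ)+1) / ((s0:ℝ)+1) := by
        apply (div_le_div_iff_of_pos_right hs).mpr; linarith
      have hb1 : (((j:ℕ):ℝ)+1) / ((s0:ℝ)+1) ≤ 1 := by
        rw [div_le_one hs]
        have hjs : (j:ℕ) + 1 ≤ s0 + 1 := j.isLt
        exact_mod_cast hjs
      obtain ⟨hm, hd⟩ := hud _ _ ha0 hab hb1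
      exact ⟨by rw [hlen]; exact h1s, hm, hd⟩
  · -- reverse
    intro H a b ha hab hb1
    classical
    set P := {n : ℕ | v n ∈ Set.Ico a b} with hPdef
    have key : ∀ ε > (0:ℝ), buckDensity P ≤ b - a + 2*ε ∧
        buckDensity Pᶜ ≤ 1 - (b - a) + 2*ε := by
      intro ε hε
      obtain ⟨s, A, B, hdisj, hcover, hall⟩ := H ε hε
      have hnn : ∀ j, A j ≤ B j := by
        intro j
        have h0 := density_nonneg {n : ℕ | v n ∈ Set.Ico (A j) (B j)}
        linarith [(hall j).2.2]
      set Pj : Fin s → Set ℕ := fun j => {n : ℕ | v n ∈ Set.Ico (A j) (B j)} with hPj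
      have hPdisj : ∀ i j : Fin s, i ≠ j → Disjoint (Pj i) (Pj j) := by
        intro i j hij
        rw [Set.disjoint_left]
        intro n hni hnj
        exact Set.disjoint_left.mp (hdisj hij) hni hnj
      constructor
      · -- upper bound
        set Jm : Finset (Fin s) := Finset.univ.filter
          (fun j => ((Set.Ico (A j) (B j)) ∩ Set.Ico a b).Nonempty) with hJm
        have hPsub : P ⊆ ⋃ j ∈ Jm, Pj j := by
          intro n hn
          have hv01 : v n ∈ Set.Ico (0:ℝ) 1 := ⟨le_trans ha hn.1, lt_of_lt_of_le hn.2 hb1⟩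
          have hvU : v n ∈ ⋃ j, Set.Ico (A j) (B j) := by rw [hcover]; exact hv01
          obtain ⟨j, hj⟩ := Set.mem_iUnion.mp hvU
          exact Set.mem_iUnion₂.mpr ⟨j,
            Finset.mem_filter.mpr ⟨Finset.mem_univ j, ⟨v n, hj, hn⟩⟩, hj⟩
        obtain ⟨hmJm, hdJm⟩ := finset_additive Jm Pj
          (fun i _ j _ hij => hPdisj i j hij) (fun j _ => (hall j).2.1)
        have hsum_le : ∑ j ∈ Jm, (B j - A j) ≤ (b + ε) - (a - ε) := by
          refine sum_lengths_le A B Jm hdisj hnn (a - ε) (b + ε) (by linarith) ?_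
          intro j hj
          obtain ⟨x, hx1, hx2⟩ := (Finset.mem_filter.mp hj).2
          intro y hy
          have hlen := (hall j).1
          exact ⟨by linarith [hy.1, hy.2, hx1.1, hx1.2, hx2.1, hx2.2, hlen],
                 by linarith [hy.1, hy.2, hx1.1, hx1.2, hx2.1, hx2.2, hlen]⟩
        calc buckDensity P ≤ buckDensity (⋃ j ∈ Jm, Pj j) := density_mono hPsub
          _ = ∑ j ∈ Jm, buckDensity (Pj j) := hdJm
          _ = ∑ j ∈ Jm, (B j - A j) := Finset.sum_congr rfl (fun j _ => (hall j).2.2)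
          _ ≤ b - a + 2*ε := by linarith
      · -- lower bound via complement
        set Ji : Finset (Fin s) := Finset.univ.filter
          (fun j => Set.Ico (A j) (B j) ⊆ Set.Ico a b) with hJi
        obtain ⟨hmJi, hdJi⟩ := finset_additive Ji Pj
          (fun i _ j _ hij => hPdisj i j hij) (fun j _ => (hall j).2.1)
        have hcsub : Pᶜ ⊆ (⋃ j ∈ Ji, Pj j)ᶜ := by
          intro n hn hmem
          obtain ⟨j, hj, hnj⟩ := Set.mem_iUnion₂.mp hmem
          exact hn ((Finset.mem_filter.mp hj).2 hnj)
        have hsum_ge : (b - ε) - (a + ε) ≤ ∑ j ∈ Ji, (B j - A j) := by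
          refine le_sum_lengths A B Ji hnn (a + ε) (b - ε) ?_
          intro x hx
          have hx01 : x ∈ Set.Ico (0:ℝ) 1 := ⟨by linarith [hx.1], by linarith [hx.2]⟩
          have hxU : x ∈ ⋃ j, Set.Ico (A j) (B j) := by rw [hcover]; exact hx01
          obtain ⟨j, hj⟩ := Set.mem_iUnion.mp hxU
          refine Set.mem_iUnion₂.mpr ⟨j, Finset.mem_filter.mpr ⟨Finset.mem_univ j, ?_⟩, hj⟩
          intro y hy
          have hlen := (hall j).1
          exact ⟨by linarith [hy.1, hy.2, hj.1, hj.2, hx.1, hx.2, hlen],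
                 by linarith [hy.1, hy.2, hj.1, hj.2, hx.1, hx.2, hlen]⟩
        have hcm : buckDensity ((⋃ j ∈ Ji, Pj j)ᶜ) = 1 - buckDensity (⋃ j ∈ Ji, Pj j) := by
          have h := hmJi
          unfold BuckMeasurable at h
          linarith
        have hsum_eq : ∑ j ∈ Ji, buckDensity (Pj j) = ∑ j ∈ Ji, (B j - A j) :=
          Finset.sum_congr rfl (fun j _ => (hall j).2.2)
        calc buckDensity Pᶜ ≤ buckDensity ((⋃ j ∈ Ji, Pj j)ᶜ) := density_mono hcsub
          _ = 1 - buckDensity (⋃ j ∈ Ji, Pj j) := hcm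
          _ = 1 - ∑ j ∈ Ji, (B j - A j) := by rw [hdJi, hsum_eq]
          _ ≤ 1 - (b - a) + 2*ε := by linarith
    have hPle : buckDensity P ≤ b - a := by
      refine le_of_forall_pos_le_add (fun δ hδ => ?_)
      have h := (key (δ/2) (by linarith)).1
      linarith
    have hPcle : buckDensity Pᶜ ≤ 1 - (b - a) := by
      have h2 : buckDensity Pᶜ - (1 - (b-a)) ≤ 0 := by
        by_contra hcon
        push_neg at hcon
        have h := (key ((buckDensity Pᶜ - (1 - (b-a)))/4) (by linarith)).2
        linarith
      linarith
    have hge := one_le_add_compl P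
    refine ⟨?_, by linarith⟩
    unfold BuckMeasurable
    linarith
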